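/- Suppose φ ∈ ℝ^N solves the discrete Poisson–Boltzmann equation with source ρ_j = Z·∑_{k=1}^{N_p} w_k·S(x_j - x_k), where Z ∈ ℝ, w_k, x_k ∈ ℝ (k = 1,…,N_p), S : ℝ → ℝ, and x_j ∈ ℝ are the grid points. Then the discrete neutrality condition holds: Z·Δx·∑_{j=1}^N ∑_{k=1}^{N_p} w_k·S(x_j - x_k) = Δx·∑_{j=1}^N n₀_j·exp(φ_j/T_j). -/

import Mathlib

open Matrix BigOperators

/-- The periodic centered second-difference matrix on `Fin N`. -/
noncomputable def Amat (N : ℕ) [NeZero N] (dx : ℝ) : Matrix (Fin N) (Fin N) ℝ :=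
  fun j k =>
    if k = j then -2 / dx ^ 2
    else if k = j + 1 then 1 / dx ^ 2
    else if k = j - 1 then 1 / dx ^ 2
    else 0

lemma Amat_colsum (N : ℕ) [NeZero N] (hN : 3 ≤ N) (dx : ℝ) (k : Fin N) :
    ∑ j, Amat N dx j k = 0 := by
  have h1 : (1 : Fin N) ≠ 0 := by
    intro h
    have := congrArg Fin.val h
    simp [Fin.val_one, Nat.mod_eq_of_lt (show 1 < N by omega)] at this
  have h2 : (2 : Fin N) ≠ 0 := by
    intro h
    open Fin.NatCast in
    have h' : ((2 : ℕ) : Fin N) = 0 := by norm_cast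
    open Fin.NatCast in
    have := (Fin.natCast_eq_zero).mp h'
    have := Nat.le_of_dvd (by norm_num) this
    omega
  have d2 : ¬ (k = k + 1) := fun h => h1 (left_eq_add.mp h)
  have d1 : ¬ (k = k - 1) := by
    intro h
    apply h1
    have : k + 1 = k := by nth_rewrite 1 [h]; exact sub_add_cancel k 1
    exact (add_eq_left).mp this
  have d3 : ¬ ((k - 1 : Fin N) = k + 1) := by
    intro h
    apply h2
    have : k = k + 2 := by
      nth_rewrite 1 [← sub_add_cancel k 1]
      rw [h, add_assoc]
      congr 1
      apply Fin.ext
      simp [Fin.val_add]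
    exact (left_eq_add).mp this
  have hpt : ∀ j : Fin N, Amat N dx j k =
      (if j = k then -2/dx^2 else 0) +
      ((if j = k - 1 then 1/dx^2 else 0) + (if j = k + 1 then 1/dx^2 else 0)) := by
    intro j
    have c2 : (k = j + 1) ↔ (j = k - 1) := by rw [eq_sub_iff_add_eq, eq_comm]
    have c3 : (k = j - 1) ↔ (j = k + 1) := by rw [eq_sub_iff_add_eq, eq_comm]
    unfold Amat
    simp only [eq_comm (a := k) (b := j), c2, c3]
    by_cases hjk : j = k
    · subst hjk
      simp [d1, d2]
    · by_cases hjm : j = k - 1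
      · subst hjm
        simp [hjk, d3]
      · by_cases hjp : j = k + 1
        · subst hjp
          have d3' : ¬ ((k + 1 : Fin N) = k - 1) := fun h => d3 h.symm
          simp [hjk, d3']
        · simp [hjk, hjm, hjp]
  rw [Finset.sum_congr rfl (fun j _ => hpt j)]
  rw [Finset.sum_add_distrib, Finset.sum_add_distrib]
  simp [Finset.sum_ite_eq']
  ring

/-- any solution of the discrete Poisson–Boltzmann equation with particle source
satisfies the discrete neutrality condition. -/
theorem discrete_neutrality (N : ℕ) [NeZero N] (hN : 3 ≤ N) (dx : ℝ) (hdx : 0 < dx)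
    (Np : ℕ) (Z : ℝ) (w xp : Fin Np → ℝ) (S : ℝ → ℝ) (xg : Fin N → ℝ)
    (n0 T : Fin N → ℝ) (hn0 : ∀ j, 0 < n0 j) (hT : ∀ j, 0 < T j)
    (φ : Fin N → ℝ)
    (hPB : ∀ j, -(Z * ∑ k, w k * S (xg j - xp k)) + (Amat N dx).mulVec φ j
        + n0 j * Real.exp (φ j / T j) = 0) :
    Z * dx * ∑ j : Fin N, ∑ k, w k * S (xg j - xp k)
      = dx * ∑ j : Fin N, n0 j * Real.exp (φ j / T j) := by
  have hA : ∑ j, (Amat N dx).mulVec φ j = 0 := by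
    unfold Matrix.mulVec dotProduct
    rw [Finset.sum_comm]
    rw [Finset.sum_congr rfl (fun k _ => (Finset.sum_mul ..).symm)]
    simp [Amat_colsum N hN dx]
  have H : ∑ j, (-(Z * ∑ k, w k * S (xg j - xp k)) + (Amat N dx).mulVec φ j
      + n0 j * Real.exp (φ j / T j)) = 0 := by
    simp [hPB]
  rw [Finset.sum_add_distrib, Finset.sum_add_distrib, hA, Finset.sum_neg_distrib,
    ← Finset.mul_sum] at H
  linear_combination -dx * H
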